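/- arXiv:2510.21431 — 7 statements merged into one kernel-verified Lean document; each statement's English description precedes it below -/
import Mathlib

section
/- Let M ≥ 0 be a real number and let (x_τ)_{τ≥0} be a sequence of real numbers with x_0 ≥ 0 and satisfying x_τ ≥ 1 + √(M · x_{τ-1}) for every integer τ ≥ 1. Then for every integer τ ≥ 1 one has x_τ ≥ M^(1 − 2^(1−τ)), where the power is real exponentiation. -/
/-- Epoch-length growth lemma: if `x 0 ≥ 0` and `x τ ≥ 1 + √(M · x (τ-1))` for all
`τ ≥ 1`, then `x τ ≥ M ^ (1 - 2^(1-τ))` for all `τ ≥ 1` (real exponentiation). -/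
theorem stmt_0 (M : ℝ) (hM : 0 ≤ M) (x : ℕ → ℝ) (hx0 : 0 ≤ x 0)
    (hrec : ∀ τ : ℕ, 1 ≤ τ → x τ ≥ 1 + Real.sqrt (M * x (τ - 1))) :
    ∀ τ : ℕ, 1 ≤ τ → x τ ≥ M ^ ((1 : ℝ) - (2 : ℝ) ^ ((1 : ℝ) - (τ : ℝ))) := by
  intro τ hτ
  induction τ with
  | zero => omega
  | succ n ih =>
    rcases Nat.lt_or_ge n 1 with hn | hn
    · -- base case: n = 0
      interval_cases n
      have h1 := hrec 1 le_rfl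
      have hs : (0:ℝ) ≤ Real.sqrt (M * x 0) := Real.sqrt_nonneg _
      have hexp : (1:ℝ) - (2:ℝ) ^ ((1:ℝ) - ((1:ℕ):ℝ)) = 0 := by norm_num
      simpa [hexp, Real.rpow_zero] using le_trans (by linarith) h1
    · -- inductive step: n ≥ 1
      have ihn := ih hn
      set e : ℝ := (1:ℝ) - (2:ℝ) ^ ((1:ℝ) - (n:ℝ)) with he
      have hcast : (1:ℝ) - ((n+1:ℕ):ℝ) = -(n:ℝ) := by push_cast; ring
      have h2n : (2:ℝ) ^ ((1:ℝ) - (n:ℝ)) = 2 * (2:ℝ) ^ (-(n:ℝ)) := by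
        rw [show (1:ℝ) - (n:ℝ) = 1 + (-(n:ℝ)) by ring,
          Real.rpow_add (by norm_num), Real.rpow_one]
      have hgoal_exp : (1:ℝ) - (2:ℝ) ^ ((1:ℝ) - ((n+1:ℕ):ℝ)) = (1 + e) / 2 := by
        rw [hcast, he, h2n]; ring
      have hrecn := hrec (n+1) (by omega)
      simp only [Nat.add_sub_cancel] at hrecn
      rcases eq_or_lt_of_le hM with hM0 | hM0
      · -- M = 0
        have hepos : (0:ℝ) < (1 + e) / 2 := by
          have h1 : (2:ℝ) ^ ((1:ℝ) - (n:ℝ)) ≤ 1 := by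
            apply Real.rpow_le_one_of_one_le_of_nonpos (by norm_num)
            have : (1:ℝ) ≤ (n:ℝ) := by exact_mod_cast hn
            linarith
          rw [he]; linarith
        rw [hgoal_exp, ← hM0, Real.zero_rpow (ne_of_gt hepos)]
        have hs : (0:ℝ) ≤ Real.sqrt (M * x n) := Real.sqrt_nonneg _
        linarith
      · -- M > 0
        have hMe : (0:ℝ) ≤ M ^ e := Real.rpow_nonneg hM e
        have hmul : M * M ^ e ≤ M * x n := by
          apply mul_le_mul_of_nonneg_left ihn hM
        have hMMe : M * M ^ e = M ^ (1 + e) := by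
          rw [Real.rpow_add hM0, Real.rpow_one]
        have hsqrt : Real.sqrt (M ^ (1 + e)) = M ^ ((1 + e) / 2) := by
          rw [Real.sqrt_eq_rpow, ← Real.rpow_mul hM]
          ring_nf
        have h1 : M ^ ((1 + e) / 2) ≤ Real.sqrt (M * x n) := by
          rw [← hsqrt]
          exact Real.sqrt_le_sqrt (by linarith [hMMe])
        have hs : (0:ℝ) ≤ Real.sqrt (M * x n) := Real.sqrt_nonneg _
        rw [hgoal_exp]
        linarith
end

section
/- Let M ≥ 2 be a real number and let (x_τ)_{τ≥0} be a sequence of real numbers with x_0 ≥ 0 and x_τ ≥ 1 + √(M · x_{τ-1}) for every integer τ ≥ 1. Then for every integer τ with τ − 1 ≥ log₂(log₂ M), one has x_τ ≥ M/2. -/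
/-- If `M ≥ 2`, `x 0 ≥ 0`, and `x τ ≥ 1 + √(M · x (τ-1))` for all `τ ≥ 1`, then
`x τ ≥ M / 2` whenever `τ - 1 ≥ log₂ (log₂ M)`. -/
theorem stmt_2 (M : ℝ) (hM : 2 ≤ M) (x : ℕ → ℝ) (hx0 : 0 ≤ x 0)
    (hrec : ∀ τ : ℕ, 1 ≤ τ → x τ ≥ 1 + Real.sqrt (M * x (τ - 1))) :
    ∀ τ : ℕ, (τ : ℝ) - 1 ≥ Real.logb 2 (Real.logb 2 M) → x τ ≥ M / 2 := by
  have hM0 : (0:ℝ) < M := by linarith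
  have hM1 : (1:ℝ) ≤ M := by linarith
  -- key: x τ ≥ M ^ (1 - 2^(1-τ)) for τ ≥ 1
  have key : ∀ τ : ℕ, 1 ≤ τ → x τ ≥ M ^ (1 - (2:ℝ) ^ (1 - (τ:ℝ))) := by
    intro τ hτ
    induction τ with
    | zero => omega
    | succ n ih =>
      rcases Nat.eq_or_lt_of_le hτ with h1 | h1
      · -- n + 1 = 1, i.e. n = 0
        have hn : n = 0 := by omega
        subst hn
        have := hrec 1 le_rfl
        simp only [Nat.cast_one] at *
        have : x 1 ≥ 1 := by
          have hs : 0 ≤ Real.sqrt (M * x 0) := Real.sqrt_nonneg _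
          simpa using le_trans (by linarith) this
        have hg : M ^ ((1:ℝ) - (2:ℝ) ^ (1 - ((0:ℕ)+1:ℕ) : ℝ)) = 1 := by
          norm_num
        rw [hg]
        exact this
      · have hn : 1 ≤ n := by omega
        have ihn := ih hn
        have hxn : 0 < x n := lt_of_lt_of_le (Real.rpow_pos_of_pos hM0 _) ihn
        have hrecn := hrec (n+1) (by omega)
        simp only [Nat.add_sub_cancel] at hrecn
        have hsq : Real.sqrt (M * x n) ≥ Real.sqrt (M * M ^ (1 - (2:ℝ) ^ (1 - (n:ℝ)))) := by
          apply Real.sqrt_le_sqrt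
          have := mul_le_mul_of_nonneg_left ihn (le_of_lt hM0)
          linarith
        have hcalc : Real.sqrt (M * M ^ (1 - (2:ℝ) ^ (1 - (n:ℝ))))
            = M ^ (1 - (2:ℝ) ^ (1 - ((n:ℝ)+1))) := by
          have h1' : M * M ^ ((1:ℝ) - (2:ℝ) ^ (1 - (n:ℝ)))
              = M ^ ((1:ℝ) + (1 - (2:ℝ) ^ (1 - (n:ℝ)))) := by
            rw [Real.rpow_add hM0, Real.rpow_one]
          rw [h1', Real.sqrt_eq_rpow, ← Real.rpow_mul (le_of_lt hM0)]
          congr 1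
          have hhalf : (2:ℝ) ^ (1 - ((n:ℝ)+1)) * 2 = (2:ℝ) ^ (1 - (n:ℝ)) := by
            rw [← Real.rpow_add_one (by norm_num : (2:ℝ) ≠ 0)]
            congr 1; ring
          linarith
        have : x (n+1) ≥ 1 + M ^ (1 - (2:ℝ) ^ (1 - ((n:ℝ)+1))) := by
          rw [← hcalc]; linarith
        push_cast
        have hp : (0:ℝ) ≤ M ^ (1 - (2:ℝ) ^ (1 - ((n:ℝ)+1))) :=
          le_of_lt (Real.rpow_pos_of_pos hM0 _)
        push_cast at this
        linarith
  intro τ hτ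
  have hlog1 : (1:ℝ) ≤ Real.logb 2 M := by
    rw [show (1:ℝ) = Real.logb 2 2 by simp]
    exact Real.logb_le_logb_of_le (by norm_num) (by norm_num) hM
  have hlogpos : (0:ℝ) < Real.logb 2 M := by linarith
  have hτ1 : 1 ≤ τ := by
    have h0 : (0:ℝ) ≤ Real.logb 2 (Real.logb 2 M) := Real.logb_nonneg (by norm_num) hlog1
    have : (1:ℝ) ≤ (τ:ℝ) := by linarith
    exact_mod_cast this
  have hk := key τ hτ1
  -- show M ^ (1 - 2^(1-τ)) ≥ M / 2
  have h2 : (2:ℝ) ^ ((τ:ℝ) - 1) ≥ Real.logb 2 M := by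
    calc Real.logb 2 M = (2:ℝ) ^ (Real.logb 2 (Real.logb 2 M)) :=
          (Real.rpow_logb (by norm_num) (by norm_num) hlogpos).symm
      _ ≤ (2:ℝ) ^ ((τ:ℝ) - 1) := Real.rpow_le_rpow_of_exponent_le (by norm_num) hτ
  have h3 : (2:ℝ) ^ (1 - (τ:ℝ)) ≤ 1 / Real.logb 2 M := by
    rw [show (1:ℝ) - (τ:ℝ) = -((τ:ℝ) - 1) by ring, Real.rpow_neg (by norm_num),
      ← one_div]
    exact one_div_le_one_div_of_le hlogpos h2
  have hexp : 1 - 1 / Real.logb 2 M ≤ 1 - (2:ℝ) ^ (1 - (τ:ℝ)) := by linarith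
  have h4 : M ^ (1 - 1 / Real.logb 2 M) ≤ M ^ (1 - (2:ℝ) ^ (1 - (τ:ℝ))) :=
    Real.rpow_le_rpow_of_exponent_le hM1 hexp
  have hMeq : M ^ (1 - 1 / Real.logb 2 M) = M / 2 := by
    obtain ⟨L, hL⟩ : ∃ L, Real.logb 2 M = L := ⟨_, rfl⟩
    rw [hL] at hlogpos ⊢
    have hM2 : M = (2:ℝ) ^ L := by rw [← hL, Real.rpow_logb two_pos (by norm_num) hM0]
    have h2eq : M ^ ((1:ℝ)/L) = 2 := by
      conv_lhs => rw [hM2]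
      rw [← Real.rpow_mul (by norm_num), mul_one_div, div_self (ne_of_gt hlogpos),
        Real.rpow_one]
    rw [Real.rpow_sub hM0, Real.rpow_one, h2eq]
  linarith [hMeq ▸ h4]
end

section
/- Let d, m, T be positive integers with (T·m)/d ≥ 4 (as a real number). Suppose that for each i ∈ {1,…,d} there is an integer K_i ≥ 1 and nonnegative reals c_{i,1}, …, c_{i,K_i} (epoch lengths) such that, setting c_{i,0} = 0, for every 1 ≤ τ ≤ K_i − 1 one has c_{i,τ} ≥ 1 + √((T·m/d) · c_{i,τ−1}), and such that the total length satisfies Σ_{i=1}^{d} Σ_{τ=1}^{K_i} c_{i,τ} ≤ m·T. Then Σ_{i=1}^{d} K_i ≤ d · (log₂(log₂(T·m/d)) + 4). -/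
/-- Oracle-query bound for the adaptive framework (AROQ-CMAB): if for each base arm
`i` the epoch lengths `c i 1, …, c i (K i)` are nonnegative, satisfy (with `c i 0 = 0`)
the threshold recursion `c i τ ≥ 1 + √((Tm/d) · c i (τ-1))` for `1 ≤ τ ≤ K i - 1`,
and the total length is at most `m·T`, then the total number of epochs satisfies
`∑ i, K i ≤ d · (log₂ (log₂ (Tm/d)) + 4)`, provided `Tm/d ≥ 4`. -/
theorem stmt_3 (d m T : ℕ) (hd : 0 < d) (hm : 0 < m) (hT : 0 < T)
    (h4 : (4 : ℝ) ≤ (T : ℝ) * m / d)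
    (K : Fin d → ℕ) (hK : ∀ i, 1 ≤ K i)
    (c : Fin d → ℕ → ℝ)
    (hc0 : ∀ i, c i 0 = 0)
    (hcnn : ∀ i, ∀ τ : ℕ, 1 ≤ τ → τ ≤ K i → 0 ≤ c i τ)
    (hrec : ∀ i, ∀ τ : ℕ, 1 ≤ τ → τ ≤ K i - 1 →
      c i τ ≥ 1 + Real.sqrt (((T : ℝ) * m / d) * c i (τ - 1)))
    (htot : ∑ i, ∑ τ ∈ Finset.Icc 1 (K i), c i τ ≤ (m : ℝ) * T) :
    (∑ i, (K i : ℝ)) ≤ (d : ℝ) * (Real.logb 2 (Real.logb 2 ((T : ℝ) * m / d)) + 4) := by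
  set M : ℝ := (T : ℝ) * m / d with hM
  have hM1 : (1 : ℝ) ≤ M := by linarith
  have hMpos : (0 : ℝ) < M := by linarith
  -- logarithms
  have hlog4 : Real.logb 2 (4 : ℝ) = 2 := by
    have h42 : (4 : ℝ) = (2:ℝ) ^ ((2:ℕ) : ℝ) := by
      rw [Real.rpow_natCast]; norm_num
    rw [h42, Real.logb_rpow (by norm_num) (by norm_num)]
    norm_num
  have hlogM2 : (2 : ℝ) ≤ Real.logb 2 M := by
    calc (2:ℝ) = Real.logb 2 4 := hlog4.symm
      _ ≤ Real.logb 2 M := Real.logb_le_logb_of_le one_lt_two (by norm_num) h4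
  have hlogMpos : (0 : ℝ) < Real.logb 2 M := by linarith
  set L : ℝ := Real.logb 2 (Real.logb 2 M) with hLdef
  have hL1 : (1 : ℝ) ≤ L := by
    have h := Real.logb_le_logb_of_le (b := 2) (by norm_num) (by norm_num : (0:ℝ) < 2) hlogM2
    rw [Real.logb_self_eq_one (by norm_num)] at h
    exact h
  have h2L : (2 : ℝ) ^ L = Real.logb 2 M :=
    Real.rpow_logb (by norm_num) (by norm_num) hlogMpos
  set N : ℕ := ⌈L⌉₊ + 1 with hNdef
  have hN1 : 1 ≤ N := by omega
  have hNL : (N : ℝ) ≤ L + 2 := by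
    have : (⌈L⌉₊ : ℝ) < L + 1 := Nat.ceil_lt_add_one (by linarith)
    push_cast [hNdef]
    linarith
  have hLN : L + 1 ≤ (N : ℝ) := by
    have := Nat.le_ceil L
    push_cast [hNdef]
    linarith
  -- growth lemma: doubly-exponential lower bound on epoch lengths
  have grow : ∀ i, ∀ τ : ℕ, 1 ≤ τ → τ ≤ K i - 1 →
      M ^ (1 - (2:ℝ) ^ (1 - (τ:ℝ))) ≤ c i τ := by
    intro i τ
    induction τ with
    | zero => intro h; omega
    | succ n ih =>
      intro _ hle
      rcases Nat.eq_zero_or_pos n with hn | hn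
      · subst hn
        have h1 := hrec i 1 le_rfl (by omega)
        simp only [show (1:ℕ) - 1 = 0 from rfl, hc0 i, mul_zero, Real.sqrt_zero] at h1
        have hE : M ^ ((1:ℝ) - (2:ℝ) ^ ((1:ℝ) - ((0+1:ℕ):ℝ))) = 1 := by
          norm_num
        rw [hE]
        linarith
      · have hrecn := hrec i (n+1) (by omega) hle
        have ihn : M ^ (1 - (2:ℝ) ^ (1 - (n:ℝ))) ≤ c i n := ih hn (by omega)
        set a : ℝ := 1 - (2:ℝ) ^ (1 - (n:ℝ)) with ha
        have step1 : Real.sqrt (M * M ^ a) ≤ Real.sqrt (M * c i n) :=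
          Real.sqrt_le_sqrt (mul_le_mul_of_nonneg_left ihn hMpos.le)
        have key : Real.sqrt (M * M ^ a) = M ^ (1 - (2:ℝ) ^ (1 - ((n:ℝ)+1))) := by
          have e1 : M * M ^ a = M ^ (1 + a) := by
            rw [Real.rpow_add hMpos, Real.rpow_one]
          have e2 : (2:ℝ) ^ (1 - ((n:ℝ)+1)) = (2:ℝ) ^ (1 - (n:ℝ)) / 2 := by
            rw [show (1 - ((n:ℝ)+1)) = (1 - (n:ℝ)) - 1 by ring,
              Real.rpow_sub (by norm_num), Real.rpow_one]
          have e3 : (1 + a) * (1/2) = 1 - (2:ℝ) ^ (1 - ((n:ℝ)+1)) := by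
            rw [e2, ha]; ring
          rw [e1, Real.sqrt_eq_rpow, ← Real.rpow_mul hMpos.le, e3]
        have hcast : ((n+1:ℕ):ℝ) = (n:ℝ) + 1 := by push_cast; ring
        calc M ^ (1 - (2:ℝ) ^ (1 - ((n+1:ℕ):ℝ)))
            = Real.sqrt (M * M ^ a) := by rw [key, hcast]
          _ ≤ Real.sqrt (M * c i n) := step1
          _ ≤ 1 + Real.sqrt (M * c i n) := by
              linarith [Real.sqrt_nonneg (M * c i n)]
          _ ≤ c i (n+1) := by simpa using hrecn
  -- big epochs are long: for N ≤ τ ≤ K i - 1, c i τ ≥ M / 2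
  have big : ∀ i, ∀ τ : ℕ, N ≤ τ → τ ≤ K i - 1 → M / 2 ≤ c i τ := by
    intro i τ hNτ hτ
    have h1 : M ^ (1 - (2:ℝ) ^ (1 - (τ:ℝ))) ≤ c i τ := grow i τ (le_trans hN1 hNτ) hτ
    have hτR : (N : ℝ) ≤ (τ : ℝ) := by exact_mod_cast hNτ
    have h2 : (2:ℝ) ^ (1 - (τ:ℝ)) ≤ (2:ℝ) ^ (-L) := by
      apply Real.rpow_le_rpow_of_exponent_le (by norm_num)
      linarith
    have h2' : (2:ℝ) ^ (-L) = 1 / Real.logb 2 M := by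
      rw [Real.rpow_neg (by norm_num), h2L, one_div]
    have h3 : M ^ ((2:ℝ) ^ (1 - (τ:ℝ))) ≤ M ^ (1 / Real.logb 2 M) := by
      apply Real.rpow_le_rpow_of_exponent_le hM1
      rw [← h2']; exact h2
    have h4' : M ^ (1 / Real.logb 2 M) = 2 := by
      nth_rewrite 1 [← Real.rpow_logb (by norm_num : (0:ℝ) < 2) (by norm_num) hMpos]
      rw [← Real.rpow_mul (by norm_num : (0:ℝ) ≤ 2), mul_one_div,
        div_self hlogMpos.ne', Real.rpow_one]
    have h5 : M ^ ((2:ℝ) ^ (1 - (τ:ℝ))) ≤ 2 := le_trans h3 (le_of_eq h4')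
    have h6 : M / 2 ≤ M ^ (1 - (2:ℝ) ^ (1 - (τ:ℝ))) := by
      rw [Real.rpow_sub hMpos, Real.rpow_one]
      apply div_le_div_of_nonneg_left hMpos.le (Real.rpow_pos_of_pos hMpos _) h5
    linarith
  -- per-arm sum lower bound
  have key : ∀ i, ((K i - N : ℕ) : ℝ) * (M/2) ≤ ∑ τ ∈ Finset.Icc 1 (K i), c i τ := by
    intro i
    have hsub : Finset.Icc N (K i - 1) ⊆ Finset.Icc 1 (K i) := by
      intro x hx
      simp only [Finset.mem_Icc] at *
      omega
    have h1 : ∑ τ ∈ Finset.Icc N (K i - 1), c i τ ≤ ∑ τ ∈ Finset.Icc 1 (K i), c i τ := by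
      apply Finset.sum_le_sum_of_subset_of_nonneg hsub
      intro x hx _
      simp only [Finset.mem_Icc] at hx
      exact hcnn i x hx.1 hx.2
    have h2 : ((Finset.Icc N (K i - 1)).card : ℝ) * (M/2) ≤
        ∑ τ ∈ Finset.Icc N (K i - 1), c i τ := by
      have := Finset.card_nsmul_le_sum (Finset.Icc N (K i - 1)) (c i) (M/2)
        (fun x hx => by simp only [Finset.mem_Icc] at hx; exact big i x hx.1 hx.2)
      simpa [nsmul_eq_mul] using this
    have hcard : (Finset.Icc N (K i - 1)).card = K i - N := by
      rw [Nat.card_Icc]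
      omega
    rw [← hcard]
    exact le_trans h2 h1
  -- total: ∑ (K i - N) ≤ 2 d
  have hdM : (m : ℝ) * T = (d : ℝ) * M := by
    rw [hM]
    field_simp
  have tot2 : (∑ i, ((K i - N : ℕ) : ℝ)) * (M/2) ≤ (d : ℝ) * M := by
    rw [Finset.sum_mul, ← hdM]
    exact le_trans (Finset.sum_le_sum fun i _ => key i) htot
  have tot3 : (∑ i, ((K i - N : ℕ) : ℝ)) ≤ 2 * d := by
    have hM2 : (0:ℝ) < M / 2 := by linarith
    nlinarith [tot2]
  -- conclude
  have final : ∑ i, (K i : ℝ) ≤ (d : ℝ) * N + ∑ i, ((K i - N : ℕ) : ℝ) := by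
    have : ∀ i : Fin d, (K i : ℝ) ≤ (N : ℝ) + ((K i - N : ℕ) : ℝ) := by
      intro i
      have : K i ≤ N + (K i - N) := by omega
      exact_mod_cast this
    calc ∑ i, (K i : ℝ) ≤ ∑ i : Fin d, ((N : ℝ) + ((K i - N : ℕ) : ℝ)) :=
          Finset.sum_le_sum fun i _ => this i
      _ = (d : ℝ) * N + ∑ i, ((K i - N : ℕ) : ℝ) := by
          rw [Finset.sum_add_distrib, Finset.sum_const, Finset.card_univ, Fintype.card_fin,
            nsmul_eq_mul]
  have hdpos : (0:ℝ) < d := by exact_mod_cast hd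
  calc ∑ i, (K i : ℝ) ≤ (d : ℝ) * N + ∑ i, ((K i - N : ℕ) : ℝ) := final
    _ ≤ (d : ℝ) * (L + 2) + 2 * d := by
        have := mul_le_mul_of_nonneg_left hNL hdpos.le
        linarith
    _ = (d : ℝ) * (L + 4) := by ring
end

section
/- Let T > 1 be a real number, M ≥ 2 an integer, η = T^(1/(2 − 2^(1−M))) (real exponentiation), and define t_0 = 1 and t_τ = η · √(t_{τ−1}) for τ ≥ 1. Then Σ_{τ=1}^{M−1} (t_{τ+1} − t_τ)/√(t_τ − t_{τ−1}) ≤ η · √((M−1) · T). -/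
/-- Deterministic core of the SROQ-CMAB regret bound: with `T > 1`, `M ≥ 2`,
`η = T^(1/(2 - 2^(1-M)))`, `t 0 = 1` and `t τ = η · √(t (τ-1))`, one has
`∑_{τ=1}^{M-1} (t (τ+1) - t τ)/√(t τ - t (τ-1)) ≤ η · √((M-1) · T)`. -/
theorem stmt_8 (T : ℝ) (hT : 1 < T) (M : ℕ) (hM : 2 ≤ M)
    (η : ℝ) (hη : η = T ^ ((1 : ℝ) / (2 - (2 : ℝ) ^ ((1 : ℝ) - (M : ℝ)))))
    (t : ℕ → ℝ) (ht0 : t 0 = 1)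
    (htrec : ∀ τ : ℕ, 1 ≤ τ → t τ = η * Real.sqrt (t (τ - 1))) :
    ∑ τ ∈ Finset.Icc 1 (M - 1), (t (τ + 1) - t τ) / Real.sqrt (t τ - t (τ - 1)) ≤
      η * Real.sqrt (((M : ℝ) - 1) * T) := by
  have hMR : (2:ℝ) ≤ (M:ℝ) := by exact_mod_cast hM
  set e : ℝ := 2 - (2:ℝ) ^ ((1:ℝ) - (M:ℝ)) with he
  have hexp1 : (2:ℝ) ^ ((1:ℝ) - (M:ℝ)) ≤ 1 :=
    Real.rpow_le_one_of_one_le_of_nonpos (by norm_num) (by linarith)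
  have hepos : 0 < e := by
    have h0 : (0:ℝ) < (2:ℝ) ^ ((1:ℝ)-(M:ℝ)) := Real.rpow_pos_of_pos (by norm_num) _
    simp only [he]; linarith
  have hη1 : 1 < η := by
    rw [hη]
    rw [Real.one_lt_rpow_iff_of_pos (by linarith)]
    exact Or.inl ⟨hT, by positivity⟩
  have hηpos : 0 < η := by linarith
  -- basic step facts
  have hstep : ∀ τ, 1 ≤ t τ ∧ t τ < t (τ+1) := by
    intro τ
    induction τ with
    | zero =>
      refine ⟨le_of_eq ht0.symm, ?_⟩
      rw [ht0, htrec 1 le_rfl]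
      simp [ht0]
      linarith
    | succ n ih =>
      obtain ⟨h1, h2⟩ := ih
      refine ⟨by linarith, ?_⟩
      have e1 : t (n+1) = η * Real.sqrt (t n) := by
        have := htrec (n+1) (by omega); simpa using this
      have e2 : t (n+2) = η * Real.sqrt (t (n+1)) := by
        have := htrec (n+2) (by omega); simpa using this
      rw [e1, e2]
      have := Real.sqrt_lt_sqrt (by linarith) h2
      exact mul_lt_mul_of_pos_left this hηpos
  have hsm : StrictMono t := strictMono_nat_of_lt_succ (fun n => (hstep n).2)
  -- closed form
  have hclosed : ∀ τ : ℕ, t τ = η ^ ((2:ℝ) - (2:ℝ) ^ ((1:ℝ) - (τ:ℝ))) := by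
    intro τ
    induction τ with
    | zero => simp [ht0]
    | succ n ih =>
      have e1 : t (n+1) = η * Real.sqrt (t n) := by
        have := htrec (n+1) (by omega); simpa using this
      rw [e1, ih, Real.sqrt_eq_rpow, ← Real.rpow_mul hηpos.le]
      rw [show η * η ^ ((2 - (2:ℝ) ^ ((1:ℝ) - (n:ℝ))) * (1/2))
            = η ^ ((1:ℝ) + (2 - (2:ℝ) ^ ((1:ℝ) - (n:ℝ))) * (1/2)) from by
          rw [Real.rpow_add hηpos, Real.rpow_one]]
      congr 1
      have h2 : (2:ℝ) ^ ((1:ℝ) - ((n:ℝ)+1)) = (2:ℝ) ^ ((1:ℝ) - (n:ℝ)) / 2 := by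
        rw [show (1:ℝ) - ((n:ℝ)+1) = ((1:ℝ) - (n:ℝ)) - 1 by ring,
          Real.rpow_sub (by norm_num), Real.rpow_one]
      push_cast
      rw [h2]
      ring
  have htM : t M = T := by
    rw [hclosed M, ← he, hη, ← Real.rpow_mul (by linarith : (0:ℝ) ≤ T),
      one_div, inv_mul_cancel₀ hepos.ne', Real.rpow_one]
  have htM1 : t (M-1) ≤ T := htM ▸ hsm.monotone (Nat.sub_le M 1)
  -- termwise bound
  have hterm : ∀ τ ∈ Finset.Icc 1 (M-1),
      (t (τ + 1) - t τ) / Real.sqrt (t τ - t (τ - 1)) ≤ η * Real.sqrt (t τ - t (τ-1)) := by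
    intro τ hτ
    have hτ1 : 1 ≤ τ := (Finset.mem_Icc.1 hτ).1
    have hab : t (τ-1) < t τ := by
      have := hsm (Nat.sub_lt (show 0 < τ by omega) one_pos)
      simpa [Nat.succ_pred_eq_of_pos (show 0 < τ by omega)] using this
    have hb1 : 1 ≤ t (τ-1) := (hstep (τ-1)).1
    have e1 : t (τ+1) = η * Real.sqrt (t τ) := by
      have := htrec (τ+1) (by omega); simpa using this
    have e2 : t τ = η * Real.sqrt (t (τ-1)) := htrec τ hτ1
    have hsb : 1 ≤ Real.sqrt (t (τ-1)) := by
      rw [show (1:ℝ) = Real.sqrt 1 by simp]; exact Real.sqrt_le_sqrt hb1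
    have hsab : Real.sqrt (t (τ-1)) ≤ Real.sqrt (t τ) := Real.sqrt_le_sqrt hab.le
    have hsq1 : Real.sqrt (t τ) ^ 2 = t τ := Real.sq_sqrt (by linarith)
    have hsq2 : Real.sqrt (t (τ-1)) ^ 2 = t (τ-1) := Real.sq_sqrt (by linarith)
    have hnum : t (τ+1) - t τ ≤ η * (t τ - t (τ-1)) := by
      have key : Real.sqrt (t τ) - Real.sqrt (t (τ-1)) ≤ t τ - t (τ-1) := by
        nlinarith [hsb, hsab]
      have hne : t (τ+1) - t τ = η * (Real.sqrt (t τ) - Real.sqrt (t (τ-1))) := by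
        rw [mul_sub, ← e1, ← e2]
      calc t (τ+1) - t τ = η * (Real.sqrt (t τ) - Real.sqrt (t (τ-1))) := hne
        _ ≤ η * (t τ - t (τ-1)) := by
            exact mul_le_mul_of_nonneg_left key hηpos.le
    have hdpos : 0 < t τ - t (τ-1) := by linarith
    have hspos : 0 < Real.sqrt (t τ - t (τ-1)) := Real.sqrt_pos.2 hdpos
    calc (t (τ + 1) - t τ) / Real.sqrt (t τ - t (τ - 1))
        ≤ (η * (t τ - t (τ-1))) / Real.sqrt (t τ - t (τ-1)) := by gcongr
      _ = η * ((t τ - t (τ-1)) / Real.sqrt (t τ - t (τ-1))) := by ring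
      _ = η * Real.sqrt (t τ - t (τ-1)) := by rw [Real.div_sqrt]
  -- sum of sqrt increments via Cauchy–Schwarz
  have hsum1 : ∑ τ ∈ Finset.Icc 1 (M-1), (t (τ + 1) - t τ) / Real.sqrt (t τ - t (τ - 1))
      ≤ η * ∑ τ ∈ Finset.Icc 1 (M-1), Real.sqrt (t τ - t (τ-1)) := by
    rw [Finset.mul_sum]
    exact Finset.sum_le_sum hterm
  have hcard : (Finset.Icc 1 (M-1)).card = M - 1 := by
    rw [Nat.card_Icc]; omega
  have htel : ∑ τ ∈ Finset.Icc 1 (M-1), (t τ - t (τ-1)) = t (M-1) - 1 := by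
    have : Finset.Icc 1 (M-1) = Finset.Ico 1 (M-1+1) := by
      rw [Finset.Ico_add_one_right_eq_Icc]
    rw [this, Finset.sum_Ico_eq_sum_range, show M - 1 + 1 - 1 = M - 1 from by omega]
    rw [Finset.sum_congr rfl
      (fun x _ => by rw [Nat.add_comm 1 x, Nat.add_sub_cancel] :
        ∀ x ∈ Finset.range (M-1), t (1+x) - t (1+x-1) = t (x+1) - t x),
      Finset.sum_range_sub, ht0]
  have hCS : ∑ τ ∈ Finset.Icc 1 (M-1), Real.sqrt (t τ - t (τ-1))
      ≤ Real.sqrt (((M:ℝ) - 1) * T) := by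
    have hnn : 0 ≤ ∑ τ ∈ Finset.Icc 1 (M-1), Real.sqrt (t τ - t (τ-1)) :=
      Finset.sum_nonneg (fun i _ => Real.sqrt_nonneg _)
    have hsq : (∑ τ ∈ Finset.Icc 1 (M-1), Real.sqrt (t τ - t (τ-1)))^2
        ≤ ((M:ℝ) - 1) * T := by
      calc (∑ τ ∈ Finset.Icc 1 (M-1), Real.sqrt (t τ - t (τ-1)))^2
          ≤ (Finset.Icc 1 (M-1)).card * ∑ τ ∈ Finset.Icc 1 (M-1),
              Real.sqrt (t τ - t (τ-1)) ^ 2 := sq_sum_le_card_mul_sum_sq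
        _ = ((M:ℝ) - 1) * (t (M-1) - 1) := by
            have hrw : ∀ τ ∈ Finset.Icc 1 (M-1),
                Real.sqrt (t τ - t (τ-1)) ^ 2 = t τ - t (τ-1) := by
              intro τ hτ
              have hτ1 : 1 ≤ τ := (Finset.mem_Icc.1 hτ).1
              have hab : t (τ-1) < t τ := by
                have := hsm (Nat.sub_lt (show 0 < τ by omega) one_pos)
                simpa [Nat.succ_pred_eq_of_pos (show 0 < τ by omega)] using this
              exact Real.sq_sqrt (by linarith)
            rw [Finset.sum_congr rfl hrw, htel, hcard]
            congr 1
            rw [Nat.cast_sub (show 1 ≤ M by omega), Nat.cast_one]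
        _ ≤ ((M:ℝ) - 1) * T := by
            have h1 : 0 ≤ (M:ℝ) - 1 := by linarith
            have h2 : t (M-1) - 1 ≤ T := by linarith
            exact mul_le_mul_of_nonneg_left h2 h1
    calc ∑ τ ∈ Finset.Icc 1 (M-1), Real.sqrt (t τ - t (τ-1))
        = Real.sqrt ((∑ τ ∈ Finset.Icc 1 (M-1), Real.sqrt (t τ - t (τ-1)))^2) :=
          (Real.sqrt_sq hnn).symm
      _ ≤ Real.sqrt (((M:ℝ) - 1) * T) := Real.sqrt_le_sqrt hsq
  calc ∑ τ ∈ Finset.Icc 1 (M-1), (t (τ + 1) - t τ) / Real.sqrt (t τ - t (τ - 1))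
      ≤ η * ∑ τ ∈ Finset.Icc 1 (M-1), Real.sqrt (t τ - t (τ-1)) := hsum1
    _ ≤ η * Real.sqrt (((M:ℝ) - 1) * T) := mul_le_mul_of_nonneg_left hCS hηpos.le
end

section
/- Let d be a positive integer, S a finite subset of Fin d, Σ : Fin d → Fin d → ℝ, n : Fin d → ℝ with n i > 0 for all i, and N : Fin d → Fin d → ℝ with 0 ≤ N i j ≤ n j for all i, j. Then Σ_{i∈S} Σ_{j∈S} (N i j · Σ i j)/(n i · n j) ≤ Σ_{i∈S} (Σ_{j∈S} max(Σ i j, 0)) / n i. -/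
/-- Covariance double-sum bound: for pull counts `n i > 0` and joint pull counts
`0 ≤ N i j ≤ n j`, one has
`∑_{i∈S} ∑_{j∈S} (N i j · Σ i j)/(n i · n j) ≤ ∑_{i∈S} (∑_{j∈S} (Σ i j)₊)/n i`. -/
theorem stmt_9 (d : ℕ) (hd : 0 < d) (S : Finset (Fin d))
    (Cov : Fin d → Fin d → ℝ) (n : Fin d → ℝ) (hn : ∀ i, 0 < n i)
    (N : Fin d → Fin d → ℝ) (hN0 : ∀ i j, 0 ≤ N i j) (hNn : ∀ i j, N i j ≤ n j) :
    ∑ i ∈ S, ∑ j ∈ S, N i j * Cov i j / (n i * n j) ≤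
      ∑ i ∈ S, (∑ j ∈ S, max (Cov i j) 0) / n i := by
  have key : ∀ i ∈ S, ∑ j ∈ S, N i j * Cov i j / (n i * n j) ≤
      (∑ j ∈ S, max (Cov i j) 0) / n i := by
    intro i _
    rw [Finset.sum_div]
    refine Finset.sum_le_sum fun j _ => ?_
    have hni := hn i
    have hnj := hn j
    have hnum : N i j * Cov i j ≤ n j * max (Cov i j) 0 := by
      rcases le_or_gt 0 (Cov i j) with h | h
      · rw [max_eq_left h]
        exact mul_le_mul_of_nonneg_right (hNn i j) h
      · rw [max_eq_right h.le]
        rw [mul_zero]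
        exact mul_nonpos_of_nonneg_of_nonpos (hN0 i j) h.le
    rw [div_le_div_iff₀ (by positivity) hni]
    calc N i j * Cov i j * n i ≤ n j * max (Cov i j) 0 * n i :=
          mul_le_mul_of_nonneg_right hnum hni.le
      _ = max (Cov i j) 0 * (n i * n j) := by ring
  exact Finset.sum_le_sum key
end

section
/- Let d be a positive integer, 𝒜₀ a nonempty finite set of finite subsets of Fin d (actions), r̄ : Finset (Fin d) → ℝ, and a* ∈ 𝒜₀ with r̄ a* ≥ r̄ a for all a ∈ 𝒜₀. Let M ≥ 1 be an integer and for each epoch τ ∈ {1,…,M} let U_τ, L_τ : Finset (Fin d) → ℝ satisfy L_τ a ≤ r̄ a ≤ U_τ a for all a ∈ 𝒜₀. Define recursively 𝒜_τ = { a ∈ 𝒜_{τ−1} : for every i ∈ a, max over {b ∈ 𝒜_{τ−1} : i ∈ b} of U_τ ≥ max over 𝒜_{τ−1} of L_τ }. Then a* ∈ 𝒜_τ for every τ ∈ {0,1,…,M}. -/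
/-- The optimal action survives every elimination epoch: with valid confidence bounds
`L τ a ≤ r̄ a ≤ U τ a` at each epoch `τ ∈ {1,…,M}`, and surviving sets
`A τ = { a ∈ A (τ-1) : ∀ i ∈ a, max_{b ∈ A (τ-1), i ∈ b} U τ b ≥ max_{a' ∈ A (τ-1)} L τ a' }`,
one has `a* ∈ A τ` for all `0 ≤ τ ≤ M`. -/
theorem stmt_12 (d : ℕ) (hd : 0 < d)
    (𝒜₀ : Finset (Finset (Fin d))) (h𝒜₀ : 𝒜₀.Nonempty)
    (rbar : Finset (Fin d) → ℝ)
    (astar : Finset (Fin d)) (hstar : astar ∈ 𝒜₀)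
    (hopt : ∀ a ∈ 𝒜₀, rbar a ≤ rbar astar)
    (M : ℕ) (hM : 1 ≤ M)
    (U L : ℕ → Finset (Fin d) → ℝ)
    (hconf : ∀ τ : ℕ, 1 ≤ τ → τ ≤ M → ∀ a ∈ 𝒜₀, L τ a ≤ rbar a ∧ rbar a ≤ U τ a)
    (A : ℕ → Finset (Finset (Fin d)))
    (hA0 : A 0 = 𝒜₀)
    (hArec : ∀ τ : ℕ, 1 ≤ τ → τ ≤ M → ∀ a : Finset (Fin d),
      a ∈ A τ ↔ a ∈ A (τ - 1) ∧ ∀ i ∈ a,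
        ∃ (h1 : (A (τ - 1)).Nonempty)
          (h2 : ((A (τ - 1)).filter (fun b => i ∈ b)).Nonempty),
          (A (τ - 1)).sup' h1 (L τ) ≤
            ((A (τ - 1)).filter (fun b => i ∈ b)).sup' h2 (U τ)) :
    ∀ τ : ℕ, τ ≤ M → astar ∈ A τ := by
  have key : ∀ τ : ℕ, τ ≤ M → astar ∈ A τ ∧ A τ ⊆ 𝒜₀ := by
    intro τ
    induction τ with
    | zero => intro _; rw [hA0]; exact ⟨hstar, subset_rfl⟩
    | succ n ih =>
      intro hle
      have hn : n ≤ M := Nat.le_of_succ_le hle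
      obtain ⟨hmem, hsub⟩ := ih hn
      have h1 : 1 ≤ n + 1 := Nat.succ_le_succ (Nat.zero_le n)
      have hrec := hArec (n + 1) h1 hle
      simp only [Nat.add_sub_cancel] at hrec
      have hsubA : A (n + 1) ⊆ 𝒜₀ := fun a ha =>
        hsub ((hrec a).mp ha).1
      refine ⟨(hrec astar).mpr ⟨hmem, fun i hi => ?_⟩, hsubA⟩
      have hne : (A n).Nonempty := ⟨astar, hmem⟩
      have hne2 : ((A n).filter (fun b => i ∈ b)).Nonempty :=
        ⟨astar, Finset.mem_filter.mpr ⟨hmem, hi⟩⟩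
      refine ⟨hne, hne2, ?_⟩
      rw [Finset.sup'_le_iff]
      intro b hb
      calc L (n + 1) b ≤ rbar b := (hconf (n+1) h1 hle b (hsub hb)).1
        _ ≤ rbar astar := hopt b (hsub hb)
        _ ≤ U (n + 1) astar := (hconf (n+1) h1 hle astar hstar).2
        _ ≤ _ := Finset.le_sup' _ (Finset.mem_filter.mpr ⟨hmem, hi⟩)
  exact fun τ hτ => (key τ hτ).1
end

section
/- Let d be a positive integer and L ≥ 0. For each i ∈ Fin d, let P_i and P'_i be probability measures on ℝ, each supported on a finite subset of the interval [0,1], and let P = ⨂_i P_i and P' = ⨂_i P'_i be the corresponding product probability measures on (Fin d → ℝ). Let S be a finite subset of Fin d and let z : Fin d → ℝ with z i > 0. Suppose that for every i ∈ S and every x ∈ [0,1), P_i((-∞, x]) − P'_i((-∞, x]) ≤ z i. Then for every measurable function f : (Fin d → ℝ) → ℝ that is monotone with respect to the pointwise order, takes values in [0, L], and depends only on the coordinates in S (f y = f y' whenever y and y' agree on S), one has ∫ f dP' − ∫ f dP ≤ 2 · L · Σ_{i∈S} z i. -/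
open MeasureTheory Set

lemma upperset_diff (μ μ' : Measure ℝ) [IsProbabilityMeasure μ] [IsProbabilityMeasure μ']
    (s s' : Finset ℝ) (hs : ↑s ⊆ Icc (0:ℝ) 1) (hs' : ↑s' ⊆ Icc (0:ℝ) 1)
    (hμs : μ (↑s)ᶜ = 0) (hμ's' : μ' (↑s')ᶜ = 0)
    (z : ℝ) (hz : 0 < z)
    (hcdf : ∀ x ∈ Ico (0:ℝ) 1, (μ (Iic x)).toReal - (μ' (Iic x)).toReal ≤ z)
    (A : Set ℝ) (hA : MeasurableSet A) (hup : ∀ x ∈ A, ∀ y, x ≤ y → y ∈ A) :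
    (μ' A).toReal - (μ A).toReal ≤ z := by
  by_cases h1 : (1:ℝ) ∈ A
  · classical
    have hcompl : (μ A).toReal + (μ Aᶜ).toReal = 1 := by
      have h := measure_add_measure_compl hA (μ := μ)
      have := ENNReal.toReal_add (measure_ne_top μ A) (measure_ne_top μ Aᶜ)
      rw [← this, h]; simp
    have hcompl' : (μ' A).toReal + (μ' Aᶜ).toReal = 1 := by
      have h := measure_add_measure_compl hA (μ := μ')
      have := ENNReal.toReal_add (measure_ne_top μ' A) (measure_ne_top μ' Aᶜ)
      rw [← this, h]; simp
    set F := s.filter (· ∉ A) with hF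
    by_cases hFne : F.Nonempty
    · set u := F.max' hFne with hu
      have huF : u ∈ F := F.max'_mem hFne
      have hus : u ∈ s := (Finset.mem_filter.1 huF).1
      have huA : u ∉ A := by simpa using (Finset.mem_filter.1 huF).2
      have huI : u ∈ Icc (0:ℝ) 1 := hs hus
      have hu1 : u < 1 := lt_of_le_of_ne huI.2 (fun h => huA (h ▸ h1))
      have huIco : u ∈ Ico (0:ℝ) 1 := ⟨huI.1, hu1⟩
      -- μ Aᶜ ≤ μ (Iic u)
      have key1 : μ Aᶜ ≤ μ (Iic u) := by
        have hsub : Aᶜ ⊆ Iic u ∪ (↑s)ᶜ := by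
          intro x hx
          by_cases hxs : x ∈ s
          · left
            exact F.le_max' x (Finset.mem_filter.2 ⟨hxs, by simpa using hx⟩)
          · right; exact hxs
        calc μ Aᶜ ≤ μ (Iic u ∪ (↑s)ᶜ) := measure_mono hsub
          _ ≤ μ (Iic u) + μ (↑s)ᶜ := measure_union_le _ _
          _ = μ (Iic u) := by rw [hμs, add_zero]
      have key2 : μ' (Iic u) ≤ μ' Aᶜ := by
        apply measure_mono
        intro x hx hxA
        exact huA (hup x hxA u hx)
      have h1' : (μ Aᶜ).toReal ≤ (μ (Iic u)).toReal :=
        ENNReal.toReal_mono (measure_ne_top _ _) key1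
      have h2' : (μ' (Iic u)).toReal ≤ (μ' Aᶜ).toReal :=
        ENNReal.toReal_mono (measure_ne_top _ _) key2
      have := hcdf u huIco
      linarith
    · -- every point of s is in A, so μ Aᶜ = 0, μ A = 1
      have key : μ Aᶜ = 0 := by
        have hsub : Aᶜ ⊆ (↑s)ᶜ := by
          intro x hx hxs
          rw [Finset.not_nonempty_iff_eq_empty] at hFne
          have : x ∈ F := Finset.mem_filter.2 ⟨hxs, by simpa using hx⟩
          simp [hFne] at this
        exact measure_mono_null hsub hμs
      have hμA1 : (μ A).toReal = 1 := by
        rw [key] at hcompl; simpa using hcompl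
      have : (μ' A).toReal ≤ 1 := by
        have := prob_le_one (μ := μ') (s := A)
        simpa using ENNReal.toReal_mono (by simp) this
      linarith
  · -- 1 ∉ A ⇒ A ∩ [0,1] = ∅ ⇒ μ' A = 0
    have key : μ' A = 0 := by
      have hsub : A ⊆ (↑s')ᶜ := by
        intro x hxA hxs
        exact h1 (hup x hxA 1 (hs' hxs).2)
      exact measure_mono_null hsub hμ's'
    rw [key]
    simp only [ENNReal.toReal_zero]
    have : 0 ≤ (μ A).toReal := ENNReal.toReal_nonneg
    linarith

lemma int_bdd{α : Type*} [MeasurableSpace α] (ρ : Measure α) [IsFiniteMeasure ρ]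
    {g : α → ℝ} (hg : Measurable g) (L : ℝ) (hb : ∀ x, ‖g x‖ ≤ L) : Integrable g ρ :=
  Integrable.mono' (integrable_const L) hg.aestronglyMeasurable (Filter.Eventually.of_forall hb)

lemma pi_step {n : ℕ} (κ : Fin (n+1) → Measure ℝ) [∀ i, IsProbabilityMeasure (κ i)]
    (a : Fin (n+1)) (L : ℝ) (f : (Fin (n+1) → ℝ) → ℝ) (hf : Measurable f)
    (hbound : ∀ y, ‖f y‖ ≤ L) :
    ∫ y, f y ∂(Measure.pi κ)
      = ∫ x, (∫ y, f (a.insertNth x y) ∂(Measure.pi fun j => κ (a.succAbove j))) ∂(κ a) := by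
  have mp := measurePreserving_piFinSuccAbove κ a
  set e := MeasurableEquiv.piFinSuccAbove (fun _ : Fin (n+1) => ℝ) a with he
  have h1 : ∫ y, f y ∂(Measure.pi κ)
      = ∫ p, f (e.symm p) ∂((κ a).prod (Measure.pi fun j => κ (a.succAbove j))) := by
    rw [← mp.integral_comp' (fun p => f (e.symm p))]
    congr 1; funext x; rw [MeasurableEquiv.symm_apply_apply]
  have hsymm : ∀ (x : ℝ) (y : Fin n → ℝ), (e.symm (x, y) : Fin (n+1) → ℝ) = a.insertNth x y := by
    intro x y
    simp [he, MeasurableEquiv.piFinSuccAbove_symm_apply, Fin.insertNthEquiv]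
  rw [h1, integral_prod]
  · simp_rw [hsymm]
  · exact int_bdd _ (hf.comp e.symm.measurable) L (fun p => hbound _)

lemma G_props {n : ℕ} (ρ : Measure (Fin n → ℝ)) [IsProbabilityMeasure ρ]
    (a : Fin (n+1)) (L : ℝ) (hL : 0 ≤ L) (f : (Fin (n+1) → ℝ) → ℝ)
    (hf : Measurable f) (hmono : Monotone f) (hrange : ∀ y, f y ∈ Set.Icc (0:ℝ) L) :
    Measurable (fun x : ℝ => ∫ y, f (a.insertNth x y) ∂ρ) ∧
    Monotone (fun x : ℝ => ∫ y, f (a.insertNth x y) ∂ρ) ∧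
    (∀ x, (∫ y, f (a.insertNth x y) ∂ρ) ∈ Set.Icc (0:ℝ) L) := by
  have hbound : ∀ y, ‖f y‖ ≤ L := fun y => by
    rw [Real.norm_eq_abs, abs_le]; exact ⟨by linarith [(hrange y).1], (hrange y).2⟩
  set e := MeasurableEquiv.piFinSuccAbove (fun _ : Fin (n+1) => ℝ) a with he
  have hsymm : ∀ (x : ℝ) (y : Fin n → ℝ), (e.symm (x, y) : Fin (n+1) → ℝ) = a.insertNth x y := by
    intro x y
    simp [he, MeasurableEquiv.piFinSuccAbove_symm_apply, Fin.insertNthEquiv]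
  have hins : (fun p : ℝ × (Fin n → ℝ) => f (a.insertNth p.1 p.2)) = fun p => f (e.symm p) := by
    funext p
    obtain ⟨x, y⟩ := p
    rw [hsymm x y]
  have hFm : Measurable (fun p : ℝ × (Fin n → ℝ) => f (a.insertNth p.1 p.2)) := by
    rw [hins]; exact hf.comp e.symm.measurable
  have hle : ∀ (x : ℝ) (y : Fin n → ℝ) (x' : ℝ), x ≤ x' →
      (a.insertNth x y : Fin (n+1) → ℝ) ≤ a.insertNth x' y := by
    intro x y x' hxx'
    rw [Pi.le_def]
    intro j
    rcases eq_or_ne j a with rfl | hne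
    · simpa [Fin.insertNth_apply_same] using hxx'
    · obtain ⟨k, rfl⟩ := Fin.exists_succAbove_eq hne
      simp [Fin.insertNth_apply_succAbove]
  have hintb : ∀ x : ℝ, Integrable (fun y => f (a.insertNth x y)) ρ := fun x =>
    int_bdd ρ (hFm.comp (measurable_prodMk_left (x := x))) L (fun y => hbound _)
  refine ⟨?_, ?_, ?_⟩
  · exact (hFm.stronglyMeasurable.integral_prod_right').measurable
  · intro x x' hxx'
    exact integral_mono (hintb x) (hintb x')
      (fun y => hmono (hle x y x' hxx'))
  · intro x
    constructor
    · exact integral_nonneg (fun y => (hrange _).1)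
    · calc ∫ y, f (a.insertNth x y) ∂ρ ≤ ∫ _, L ∂ρ :=
            integral_mono (hintb x) (integrable_const L) (fun y => (hrange _).2)
        _ = L := by simp

lemma oneDim(μ μ' : Measure ℝ) [IsProbabilityMeasure μ] [IsProbabilityMeasure μ']
    (s s' : Finset ℝ) (hs : ↑s ⊆ Icc (0:ℝ) 1) (hs' : ↑s' ⊆ Icc (0:ℝ) 1)
    (hμs : μ (↑s)ᶜ = 0) (hμ's' : μ' (↑s')ᶜ = 0)
    (z L : ℝ) (hz : 0 < z) (hL : 0 ≤ L)
    (hcdf : ∀ x ∈ Ico (0:ℝ) 1, (μ (Iic x)).toReal - (μ' (Iic x)).toReal ≤ z)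
    (g : ℝ → ℝ) (hg : Measurable g) (hmono : Monotone g)
    (hr : ∀ x, g x ∈ Icc (0:ℝ) L) :
    ∫ x, g x ∂μ' - ∫ x, g x ∂μ ≤ L * z := by
  have hbound : ∀ x, ‖g x‖ ≤ L := fun x => by
    rw [Real.norm_eq_abs, abs_le]; exact ⟨by linarith [(hr x).1], (hr x).2⟩
  have hint : ∀ (ν : Measure ℝ), IsProbabilityMeasure ν → Integrable g ν := by
    intro ν hν
    exact Integrable.mono' (integrable_const L) hg.aestronglyMeasurable
      (Filter.Eventually.of_forall hbound)
  have hnn : ∀ (ν : Measure ℝ), (0:ℝ→ℝ) ≤ᵐ[ν] g :=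
    fun ν => Filter.Eventually.of_forall (fun x => (hr x).1)
  rw [(hint μ' inferInstance).integral_eq_integral_meas_lt (hnn μ'),
      (hint μ inferInstance).integral_eq_integral_meas_lt (hnn μ)]
  set h : ℝ → ℝ := fun t => (μ {a | t < g a}).toReal with hh
  set h' : ℝ → ℝ := fun t => (μ' {a | t < g a}).toReal with hh'
  have hmeas : ∀ (ν : Measure ℝ), Measurable (fun t => (ν {a : ℝ | t < g a}).toReal) :=
    fun ν => Measurable.ennreal_toReal
      (Antitone.measurable fun _ _ hst => measure_mono fun _ hlt => lt_of_le_of_lt hst hlt)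
  have hempty : ∀ t : ℝ, L < t → {a : ℝ | t < g a} = ∅ := by
    intro t ht
    ext a; simp only [mem_setOf_eq, mem_empty_iff_false, iff_false, not_lt]
    exact le_trans (hr a).2 ht.le
  set ind : ℝ → ℝ := Set.indicator (Ioc (0:ℝ) L) (fun _ => (1:ℝ)) with hind
  have hind_int : Integrable ind (volume.restrict (Ioi (0:ℝ))) := by
    rw [hind, integrable_indicator_iff measurableSet_Ioc]
    exact integrableOn_const (ne_of_lt (by
      rw [Measure.restrict_apply measurableSet_Ioc]
      exact lt_of_le_of_lt (measure_mono inter_subset_left) measure_Ioc_lt_top))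
  have hle : ∀ (ν : Measure ℝ), IsProbabilityMeasure ν → ∀ t ∈ Ioi (0:ℝ),
      ‖(ν {a : ℝ | t < g a}).toReal‖ ≤ ind t := by
    intro ν hν t ht
    rw [Real.norm_eq_abs, abs_of_nonneg ENNReal.toReal_nonneg]
    by_cases htL : t ≤ L
    · have : ind t = 1 := Set.indicator_of_mem (show t ∈ Ioc (0:ℝ) L from ⟨ht, htL⟩) _
      rw [this]
      exact ENNReal.toReal_le_of_le_ofReal zero_le_one (by simpa using prob_le_one)
    · push_neg at htL
      rw [hempty t htL]
      simp [hind, Set.indicator_apply, not_le.2 htL]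
  have hint_h : ∀ (ν : Measure ℝ), IsProbabilityMeasure ν →
      IntegrableOn (fun t => (ν {a : ℝ | t < g a}).toReal) (Ioi (0:ℝ)) := by
    intro ν hν
    refine Integrable.mono' hind_int (hmeas ν).aestronglyMeasurable ?_
    rw [ae_restrict_iff' measurableSet_Ioi]
    exact Filter.Eventually.of_forall (hle ν hν)
  simp only [measureReal_def]
  rw [← integral_sub (hint_h μ' inferInstance) (hint_h μ inferInstance)]
  have step : ∫ t in Ioi (0:ℝ), (h' t - h t) ≤
      ∫ t in Ioi (0:ℝ), Set.indicator (Ioc (0:ℝ) L) (fun _ => z) t := by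
    apply setIntegral_mono_on
    · exact ((hint_h μ' inferInstance).sub (hint_h μ inferInstance))
    · show Integrable _ (volume.restrict (Ioi (0:ℝ)))
      rw [integrable_indicator_iff measurableSet_Ioc]
      exact integrableOn_const (ne_of_lt (by
        rw [Measure.restrict_apply measurableSet_Ioc]
        exact lt_of_le_of_lt (measure_mono inter_subset_left) measure_Ioc_lt_top))
    · exact measurableSet_Ioi
    · intro t ht
      by_cases htL : t ≤ L
      · rw [show (Ioc (0:ℝ) L).indicator (fun _ => z) t = z from
          Set.indicator_of_mem (show t ∈ Ioc (0:ℝ) L from ⟨ht, htL⟩) _]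
        exact upperset_diff μ μ' s s' hs hs' hμs hμ's' z hz hcdf _
          (measurableSet_lt measurable_const hg)
          (fun x hx y hxy => lt_of_lt_of_le hx (hmono hxy))
      · push_neg at htL
        rw [Set.indicator_of_notMem (fun hmem => absurd hmem.2 (not_le.2 htL))]
        simp only [hh, hh', hempty t htL]
        simp
  refine le_trans step ?_
  rw [integral_indicator measurableSet_Ioc, setIntegral_const, measureReal_def,
    Measure.restrict_apply measurableSet_Ioc]
  have hinter : Ioc (0:ℝ) L ∩ Ioi 0 = Ioc 0 L := by
    ext x; simp only [mem_inter_iff, mem_Ioc, mem_Ioi, and_iff_left_iff_imp]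
    exact fun hx => hx.1
  rw [hinter, Real.volume_Ioc, sub_zero, ENNReal.toReal_ofReal hL, smul_eq_mul]

/-- Distribution-comparison lemma (part (b)): if for each `i ∈ S` and each
`x ∈ [0,1)` the CDF of `P i` exceeds that of `P' i` by at most `z i`, then for any
monotone measurable `f` with values in `[0,L]` depending only on the coordinates
in `S`, `∫ f dP' − ∫ f dP ≤ 2 L ∑_{i∈S} z i`. -/
theorem stmt_17 (d : ℕ) (hd : 0 < d) (L : ℝ) (hL : 0 ≤ L)
    (P P' : Fin d → Measure ℝ)
    [∀ i, IsProbabilityMeasure (P i)] [∀ i, IsProbabilityMeasure (P' i)]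
    (hsupp : ∀ i, ∃ s : Finset ℝ, ↑s ⊆ Set.Icc (0 : ℝ) 1 ∧ P i (↑s)ᶜ = 0)
    (hsupp' : ∀ i, ∃ s : Finset ℝ, ↑s ⊆ Set.Icc (0 : ℝ) 1 ∧ P' i (↑s)ᶜ = 0)
    (S : Finset (Fin d)) (z : Fin d → ℝ) (hz : ∀ i, 0 < z i)
    (hcdf : ∀ i ∈ S, ∀ x ∈ Set.Ico (0 : ℝ) 1,
      (P i (Set.Iic x)).toReal - (P' i (Set.Iic x)).toReal ≤ z i)
    (f : (Fin d → ℝ) → ℝ) (hf : Measurable f)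
    (hmono : Monotone f) (hrange : ∀ y, f y ∈ Set.Icc (0 : ℝ) L)
    (hdep : ∀ y y' : Fin d → ℝ, (∀ i ∈ S, y i = y' i) → f y = f y') :
    (∫ y, f y ∂(Measure.pi P')) - ∫ y, f y ∂(Measure.pi P) ≤
      2 * L * ∑ i ∈ S, z i := by
  classical
  obtain ⟨n, rfl⟩ : ∃ n, d = n + 1 := ⟨d - 1, (Nat.succ_pred_eq_of_pos hd).symm⟩
  have hbound : ∀ y, ‖f y‖ ≤ L := fun y => by
    rw [Real.norm_eq_abs, abs_le]; exact ⟨by linarith [(hrange y).1], (hrange y).2⟩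
  have instQ : ∀ (T : Finset (Fin (n+1))) (i : Fin (n+1)),
      IsProbabilityMeasure (if i ∈ T then P' i else P i) := by
    intro T i; split <;> infer_instance
  have key : ∀ T : Finset (Fin (n+1)),
      (∫ y, f y ∂(Measure.pi fun i => if i ∈ T then P' i else P i))
        - ∫ y, f y ∂(Measure.pi P) ≤ L * ∑ i ∈ T ∩ S, z i := by
    intro T
    induction T using Finset.induction_on with
    | empty =>
      simp only [Finset.notMem_empty, if_false, Finset.empty_inter, Finset.sum_empty,
        mul_zero, sub_self, le_refl]
    | @insert a T ha ih =>
      haveI i1 : ∀ i, IsProbabilityMeasure ((fun i => if i ∈ insert a T then P' i else P i) i) :=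
        fun i => instQ _ i
      haveI i2 : ∀ i, IsProbabilityMeasure ((fun i => if i ∈ T then P' i else P i) i) :=
        fun i => instQ _ i
      have e1 := pi_step (fun i => if i ∈ insert a T then P' i else P i) a L f hf hbound
      have e2 := pi_step (fun i => if i ∈ T then P' i else P i) a L f hf hbound
      beta_reduce at e1 e2
      have hrest : (fun j => if a.succAbove j ∈ T then P' (a.succAbove j) else P (a.succAbove j))
          = (fun j => if a.succAbove j ∈ insert a T then P' (a.succAbove j)
              else P (a.succAbove j)) := by
        funext j
        have hiff : (a.succAbove j ∈ insert a T) ↔ (a.succAbove j ∈ T) := by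
          simp [Finset.mem_insert, Fin.succAbove_ne a j]
        rw [if_congr hiff rfl rfl]
      rw [hrest] at e2
      rw [if_pos (Finset.mem_insert_self a T)] at e1
      rw [if_neg ha] at e2
      haveI i3 : ∀ j, IsProbabilityMeasure
          (if a.succAbove j ∈ insert a T then P' (a.succAbove j) else P (a.succAbove j)) :=
        fun j => instQ _ _
      obtain ⟨Gm, Gmono, Grange⟩ := G_props
        (Measure.pi fun j =>
          if a.succAbove j ∈ insert a T then P' (a.succAbove j) else P (a.succAbove j))
        a L hL f hf hmono hrange
      by_cases haS : a ∈ S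
      · obtain ⟨s, hs1, hs2⟩ := hsupp a
        obtain ⟨s', hs'1, hs'2⟩ := hsupp' a
        have h1d := oneDim (P a) (P' a) s s' hs1 hs'1 hs2 hs'2 (z a) L (hz a) hL
          (hcdf a haS) _ Gm Gmono Grange
        have hsum : ∑ i ∈ (insert a T) ∩ S, z i = z a + ∑ i ∈ T ∩ S, z i := by
          rw [Finset.insert_inter_of_mem haS, Finset.sum_insert (by
            simp only [Finset.mem_inter, not_and]
            intro hT; exact absurd hT ha)]
        rw [hsum, mul_add]
        linarith [e1, e2, h1d, ih]
      · have hGc : ∀ x x' : ℝ,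
            (∫ y, f (a.insertNth x y) ∂(Measure.pi fun j =>
              if a.succAbove j ∈ insert a T then P' (a.succAbove j) else P (a.succAbove j)))
            = ∫ y, f (a.insertNth x' y) ∂(Measure.pi fun j =>
              if a.succAbove j ∈ insert a T then P' (a.succAbove j) else P (a.succAbove j)) := by
          intro x x'
          apply integral_congr_ae
          apply Filter.Eventually.of_forall
          intro y
          apply hdep
          intro i hi
          have hia : i ≠ a := fun h => haS (h ▸ hi)
          obtain ⟨k, rfl⟩ := Fin.exists_succAbove_eq hia
          rw [Fin.insertNth_apply_succAbove, Fin.insertNth_apply_succAbove]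
        have hGfun : (fun x : ℝ => ∫ y, f (a.insertNth x y) ∂(Measure.pi fun j =>
              if a.succAbove j ∈ insert a T then P' (a.succAbove j) else P (a.succAbove j)))
            = fun _ : ℝ => ∫ y, f (a.insertNth 0 y) ∂(Measure.pi fun j =>
              if a.succAbove j ∈ insert a T then P' (a.succAbove j) else P (a.succAbove j)) :=
          funext fun x => hGc x 0
        have hc1 : ∫ x, (∫ y, f (a.insertNth x y) ∂(Measure.pi fun j =>
              if a.succAbove j ∈ insert a T then P' (a.succAbove j) else P (a.succAbove j)))
              ∂(P' a)
            = ∫ y, f (a.insertNth 0 y) ∂(Measure.pi fun j =>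
              if a.succAbove j ∈ insert a T then P' (a.succAbove j) else P (a.succAbove j)) := by
          rw [hGfun]; simp
        have hc2 : ∫ x, (∫ y, f (a.insertNth x y) ∂(Measure.pi fun j =>
              if a.succAbove j ∈ insert a T then P' (a.succAbove j) else P (a.succAbove j)))
              ∂(P a)
            = ∫ y, f (a.insertNth 0 y) ∂(Measure.pi fun j =>
              if a.succAbove j ∈ insert a T then P' (a.succAbove j) else P (a.succAbove j)) := by
          rw [hGfun]; simp
        rw [Finset.insert_inter_of_notMem haS]
        linarith [e1, e2, hc1, hc2, ih]
  have hfin := key Finset.univ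
  have huniv : (fun i : Fin (n+1) => if i ∈ (Finset.univ : Finset (Fin (n+1))) then P' i else P i)
      = P' := funext fun i => if_pos (Finset.mem_univ i)
  rw [huniv, Finset.univ_inter] at hfin
  have hS0 : 0 ≤ ∑ i ∈ S, z i := Finset.sum_nonneg fun i _ => (hz i).le
  have h2 : 2 * L * ∑ i ∈ S, z i = L * ∑ i ∈ S, z i + L * ∑ i ∈ S, z i := by ring
  have := mul_nonneg hL hS0
  linarith
end
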